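/- Let P, Q ∈ GL⁺(H), let (Λ_w)_{w∈Ω} satisfy ∫_Ω ‖Λ_w P f‖² dμ(w) ≤ B_Λ‖f‖² for all f ∈ H and (Γ_w)_{w∈Ω} satisfy ∫_Ω ‖Γ_w Q f‖² dμ(w) ≤ B_Γ‖f‖² for all f ∈ H. Then there is a unique bounded operator S on H with ⟨S f, g⟩ = ∫_Ω ⟨Γ_w Q f, Λ_w P g⟩ dμ(w) for all f, g ∈ H; moreover ‖S‖ ≤ √(B_Λ B_Γ) and its adjoint satisfies ⟨S^* f, g⟩ = ∫_Ω ⟨Λ_w P f, Γ_w Q g⟩ dμ(w) for all f, g ∈ H. -/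

import Mathlib

open MeasureTheory
open scoped ComplexInnerProductSpace

/-- Existence and uniqueness of the controlled dual g-frame operator `S` with
`⟨S f, g⟩ = ∫ ⟨Γ_w Q f, Λ_w P g⟩ dμ`, together with the norm bound `‖S‖ ≤ √(B_Λ B_Γ)` and
the formula for its adjoint. -/
theorem controlled_dual_g_frame_operator_exists_unique
    {H L Ω : Type*}
    [NormedAddCommGroup H] [InnerProductSpace ℂ H] [CompleteSpace H]
    [NormedAddCommGroup L] [InnerProductSpace ℂ L] [CompleteSpace L]
    [MeasurableSpace Ω] (μ : Measure Ω)
    (Λ Γ : Ω → H →L[ℂ] L)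
    (hΛmeas : ∀ f : H, AEStronglyMeasurable (fun w => Λ w f) μ)
    (hΛint : ∀ f : H, Integrable (fun w => ‖Λ w f‖ ^ 2) μ)
    (hΓmeas : ∀ f : H, AEStronglyMeasurable (fun w => Γ w f) μ)
    (hΓint : ∀ f : H, Integrable (fun w => ‖Γ w f‖ ^ 2) μ)
    -- P, Q ∈ GL⁺(H)
    (P Q Pinv Qinv : H →L[ℂ] H)
    (hP : P.IsPositive) (hPinv : P * Pinv = 1 ∧ Pinv * P = 1)
    (hQ : Q.IsPositive) (hQinv : Q * Qinv = 1 ∧ Qinv * Q = 1)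
    -- controlled Bessel bounds
    (BΛ BΓ : ℝ) (hBΛ : 0 < BΛ) (hBΓ : 0 < BΓ)
    (hΛBessel : ∀ f : H, ∫ w, ‖Λ w (P f)‖ ^ 2 ∂μ ≤ BΛ * ‖f‖ ^ 2)
    (hΓBessel : ∀ f : H, ∫ w, ‖Γ w (Q f)‖ ^ 2 ∂μ ≤ BΓ * ‖f‖ ^ 2) :
    ∃ S : H →L[ℂ] H,
      (∀ f g : H, ⟪S f, g⟫ = ∫ w, ⟪Γ w (Q f), Λ w (P g)⟫ ∂μ) ∧
      ‖S‖ ≤ Real.sqrt (BΛ * BΓ) ∧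
      (∀ f g : H,
        ⟪ContinuousLinearMap.adjoint S f, g⟫ = ∫ w, ⟪Λ w (P f), Γ w (Q g)⟫ ∂μ) ∧
      ∀ S' : H →L[ℂ] H,
        (∀ f g : H, ⟪S' f, g⟫ = ∫ w, ⟪Γ w (Q f), Λ w (P g)⟫ ∂μ) → S' = S := by
  classical
  -- integrability of the inner product integrand
  have hint : ∀ f g : H, Integrable (fun w => (⟪Γ w (Q f), Λ w (P g)⟫ : ℂ)) μ := by
    intro f g
    have hm : AEStronglyMeasurable (fun w => (⟪Γ w (Q f), Λ w (P g)⟫ : ℂ)) μ :=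
      (hΓmeas (Q f)).inner (hΛmeas (P g))
    refine ((hΓint (Q f)).add (hΛint (P g))).mono' hm ?_
    filter_upwards with w
    calc ‖(⟪Γ w (Q f), Λ w (P g)⟫ : ℂ)‖ ≤ ‖Γ w (Q f)‖ * ‖Λ w (P g)‖ :=
          norm_inner_le_norm _ _
      _ ≤ ‖Γ w (Q f)‖ ^ 2 + ‖Λ w (P g)‖ ^ 2 := by
          nlinarith [sq_nonneg (‖Γ w (Q f)‖ - ‖Λ w (P g)‖), norm_nonneg (Γ w (Q f)),
            norm_nonneg (Λ w (P g)), sq_nonneg (‖Γ w (Q f)‖ + ‖Λ w (P g)‖)]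
  -- key Cauchy–Schwarz estimate
  have key : ∀ f g : H, ‖∫ w, (⟪Γ w (Q f), Λ w (P g)⟫ : ℂ) ∂μ‖ ≤
      Real.sqrt (BΛ * BΓ) * ‖f‖ * ‖g‖ := by
    intro f g
    have hmemΓ : MemLp (fun w => Γ w (Q f)) (ENNReal.ofReal 2) μ := by
      rw [show (ENNReal.ofReal 2 : ENNReal) = 2 by norm_num]
      exact (memLp_two_iff_integrable_sq_norm (hΓmeas (Q f))).2 (hΓint (Q f))
    have hmemΛ : MemLp (fun w => Λ w (P g)) (ENNReal.ofReal 2) μ := by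
      rw [show (ENNReal.ofReal 2 : ENNReal) = 2 by norm_num]
      exact (memLp_two_iff_integrable_sq_norm (hΛmeas (P g))).2 (hΛint (P g))
    have hconj : Real.HolderConjugate 2 2 :=
      (Real.holderConjugate_iff_eq_conjExponent one_lt_two).2 (by norm_num)
    have hprodint : Integrable (fun w => ‖Γ w (Q f)‖ * ‖Λ w (P g)‖) μ := by
      refine ((hΓint (Q f)).add (hΛint (P g))).mono'
        ((hΓmeas (Q f)).norm.mul (hΛmeas (P g)).norm) ?_
      filter_upwards with w
      have h1 : 0 ≤ ‖Γ w (Q f)‖ * ‖Λ w (P g)‖ :=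
        mul_nonneg (norm_nonneg _) (norm_nonneg _)
      rw [Real.norm_of_nonneg h1]
      simp only [Pi.add_apply]
      nlinarith [sq_nonneg (‖Γ w (Q f)‖ - ‖Λ w (P g)‖)]
    have h1 : ‖∫ w, (⟪Γ w (Q f), Λ w (P g)⟫ : ℂ) ∂μ‖ ≤
        ∫ w, ‖Γ w (Q f)‖ * ‖Λ w (P g)‖ ∂μ := by
      refine (norm_integral_le_integral_norm _).trans ?_
      refine integral_mono_of_nonneg (Filter.Eventually.of_forall fun w => norm_nonneg _)
        hprodint ?_
      filter_upwards with w
      exact norm_inner_le_norm _ _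
    have h2 := integral_mul_norm_le_Lp_mul_Lq hconj hmemΓ hmemΛ
    have hrw : ∀ u : L, ‖u‖ ^ (2 : ℝ) = ‖u‖ ^ 2 := fun u => by
      rw [show (2 : ℝ) = ((2 : ℕ) : ℝ) by norm_num, Real.rpow_natCast]
    simp only [hrw] at h2
    have hΓnn : 0 ≤ ∫ w, ‖Γ w (Q f)‖ ^ 2 ∂μ :=
      integral_nonneg fun w => sq_nonneg _
    have hΛnn : 0 ≤ ∫ w, ‖Λ w (P g)‖ ^ 2 ∂μ :=
      integral_nonneg fun w => sq_nonneg _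
    have h3 : (∫ w, ‖Γ w (Q f)‖ ^ 2 ∂μ) ^ (1 / 2 : ℝ) ≤ Real.sqrt BΓ * ‖f‖ := by
      rw [← Real.sqrt_eq_rpow]
      calc Real.sqrt (∫ w, ‖Γ w (Q f)‖ ^ 2 ∂μ) ≤ Real.sqrt (BΓ * ‖f‖ ^ 2) :=
            Real.sqrt_le_sqrt (hΓBessel f)
        _ = Real.sqrt BΓ * ‖f‖ := by
            rw [Real.sqrt_mul hBΓ.le, Real.sqrt_sq (norm_nonneg f)]
    have h4 : (∫ w, ‖Λ w (P g)‖ ^ 2 ∂μ) ^ (1 / 2 : ℝ) ≤ Real.sqrt BΛ * ‖g‖ := by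
      rw [← Real.sqrt_eq_rpow]
      calc Real.sqrt (∫ w, ‖Λ w (P g)‖ ^ 2 ∂μ) ≤ Real.sqrt (BΛ * ‖g‖ ^ 2) :=
            Real.sqrt_le_sqrt (hΛBessel g)
        _ = Real.sqrt BΛ * ‖g‖ := by
            rw [Real.sqrt_mul hBΛ.le, Real.sqrt_sq (norm_nonneg g)]
    have h5 : (∫ w, ‖Γ w (Q f)‖ ^ 2 ∂μ) ^ (1 / 2 : ℝ) *
        (∫ w, ‖Λ w (P g)‖ ^ 2 ∂μ) ^ (1 / 2 : ℝ) ≤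
        (Real.sqrt BΓ * ‖f‖) * (Real.sqrt BΛ * ‖g‖) := by
      have := Real.rpow_nonneg hΓnn (1 / 2 : ℝ)
      have := Real.rpow_nonneg hΛnn (1 / 2 : ℝ)
      exact mul_le_mul h3 h4 (Real.rpow_nonneg hΛnn _)
        (mul_nonneg (Real.sqrt_nonneg _) (norm_nonneg _))
    have hfinal : (Real.sqrt BΓ * ‖f‖) * (Real.sqrt BΛ * ‖g‖) =
        Real.sqrt (BΛ * BΓ) * ‖f‖ * ‖g‖ := by
      rw [Real.sqrt_mul hBΛ.le]; ring
    calc ‖∫ w, (⟪Γ w (Q f), Λ w (P g)⟫ : ℂ) ∂μ‖ ≤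
          ∫ w, ‖Γ w (Q f)‖ * ‖Λ w (P g)‖ ∂μ := h1
      _ ≤ (∫ w, ‖Γ w (Q f)‖ ^ 2 ∂μ) ^ (1 / 2 : ℝ) *
          (∫ w, ‖Λ w (P g)‖ ^ 2 ∂μ) ^ (1 / 2 : ℝ) := h2
      _ ≤ (Real.sqrt BΓ * ‖f‖) * (Real.sqrt BΛ * ‖g‖) := h5
      _ = Real.sqrt (BΛ * BΓ) * ‖f‖ * ‖g‖ := hfinal
  set c := Real.sqrt (BΛ * BΓ) with hc
  have hc0 : 0 ≤ c := Real.sqrt_nonneg _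
  -- the functional in g, for fixed f
  let T : H → H →L[ℂ] ℂ := fun f =>
    LinearMap.mkContinuous
      { toFun := fun g => ∫ w, (⟪Γ w (Q f), Λ w (P g)⟫ : ℂ) ∂μ
        map_add' := fun g g' => by
          simp only [map_add, inner_add_right]
          exact integral_add (hint f g) (hint f g')
        map_smul' := fun a g => by
          simp only [_root_.map_smul, inner_smul_right, RingHom.id_apply, smul_eq_mul]
          exact integral_const_mul a _ }
      (c * ‖f‖) fun g => by
        simpa [mul_assoc] using key f g
  have hT : ∀ f g, T f g = ∫ w, (⟪Γ w (Q f), Λ w (P g)⟫ : ℂ) ∂μ := fun f g => rfl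
  have hTadd : ∀ f f', T (f + f') = T f + T f' := by
    intro f f'
    ext g
    simp only [hT, ContinuousLinearMap.add_apply, map_add, inner_add_left]
    exact integral_add (hint f g) (hint f' g)
  have hTsmul : ∀ (a : ℂ) f, T (a • f) = (starRingEnd ℂ) a • T f := by
    intro a f
    ext g
    simp only [hT, ContinuousLinearMap.smul_apply, _root_.map_smul, inner_smul_left, smul_eq_mul]
    exact integral_const_mul _ _
  have hTnorm : ∀ f, ‖T f‖ ≤ c * ‖f‖ := fun f =>
    LinearMap.mkContinuous_norm_le _ (mul_nonneg hc0 (norm_nonneg f)) _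
  -- build S from the Riesz representation
  let S₀ : H →ₗ[ℂ] H :=
    { toFun := fun f => (InnerProductSpace.toDual ℂ H).symm (T f)
      map_add' := fun f f' => by simp [hTadd]
      map_smul' := fun a f => by
        simp only [hTsmul, RingHom.id_apply, LinearIsometryEquiv.map_smulₛₗ]
        simp }
  have hS₀norm : ∀ f, ‖S₀ f‖ ≤ c * ‖f‖ := by
    intro f
    show ‖(InnerProductSpace.toDual ℂ H).symm (T f)‖ ≤ c * ‖f‖
    rw [LinearIsometryEquiv.norm_map]
    exact hTnorm f
  let S : H →L[ℂ] H := S₀.mkContinuous c hS₀norm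
  have hSinner : ∀ f g : H, ⟪S f, g⟫ = ∫ w, (⟪Γ w (Q f), Λ w (P g)⟫ : ℂ) ∂μ := by
    intro f g
    show ⟪(InnerProductSpace.toDual ℂ H).symm (T f), g⟫ = _
    rw [InnerProductSpace.toDual_symm_apply]
    exact hT f g
  refine ⟨S, hSinner, LinearMap.mkContinuous_norm_le _ hc0 _, ?_, ?_⟩
  · intro f g
    rw [ContinuousLinearMap.adjoint_inner_left, ← inner_conj_symm, hSinner g f,
      ← integral_conj]
    simp_rw [inner_conj_symm]
  · intro S' hS'
    ext f
    apply ext_inner_right ℂ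
    intro g
    rw [hS', hSinner]
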